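/- (Kairouz–Oh–Viswanath extremality for binary inputs) For any ε-DP local randomizer R : {0,1} → S with finite output set S, there exists a randomized post-processing function h : {0,1} → S such that R(0) has the same distribution as h(RR_ε(0)) and R(1) has the same distribution as h(RR_ε(1)). -/
import Mathlib


open Real

/-- The `ε`-randomized response mechanism on a bit: `rrPMF ε b y` is the probability
that `RR_ε(b)` outputs `y`; it outputs `b` with probability `e^ε/(1+e^ε)` and `1-b`
with probability `1/(1+e^ε)`. -/
noncomputable def rrPMF (ε : ℝ) (b y : Bool) : ℝ :=
  if y = b then exp ε / (1 + exp ε) else 1 / (1 + exp ε)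

/-- Extremality of randomized response for binary inputs: any `ε`-DP local
randomizer `R : {0,1} → S` is a randomized post-processing of `RR_ε`. -/
theorem stmt10 {S : Type} [Fintype S] (ε : ℝ) (hε : 0 < ε)
    (R : Bool → S → ℝ)
    (hR0 : ∀ b s, 0 ≤ R b s) (hR1 : ∀ b, ∑ s, R b s = 1)
    (hDP : ∀ b b' s, R b s ≤ exp ε * R b' s) :
    ∃ h : Bool → S → ℝ, (∀ y s, 0 ≤ h y s) ∧ (∀ y, ∑ s, h y s = 1) ∧
      ∀ b s, R b s = ∑ y, rrPMF ε b y * h y s := by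
  have hE1 : (1:ℝ) < exp ε := by
    calc (1:ℝ) = exp 0 := (exp_zero).symm
    _ < exp ε := exp_lt_exp.mpr hε
  have hd : (0:ℝ) < exp ε - 1 := by linarith
  have hpos : (0:ℝ) < 1 + exp ε := by linarith
  refine ⟨fun y s => (exp ε * R y s - R (!y) s) / (exp ε - 1), ?_, ?_, ?_⟩
  · intro y s
    apply div_nonneg _ hd.le
    have := hDP (!y) y s
    linarith
  · intro y
    rw [← Finset.sum_div]
    rw [Finset.sum_sub_distrib, ← Finset.mul_sum, hR1, hR1]
    field_simp
  · intro b s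
    rw [Fintype.sum_bool]
    cases b <;> simp [rrPMF] <;> field_simp <;> ring
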